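/- arXiv:1407.7263 — 2 statements merged into one kernel-verified Lean document; each statement's English description precedes it below -/
import Mathlib

section
/- For every integer k ≥ 3 there exists a connected finite simple identifiable graph G of order n = 11k + 1, with girth at least 5, minimum degree at least 3, and identifying code number γID(G) = 5k = (5/11)·(n − 1). (In particular, there are infinitely many connected graphs of girth at least 5 and minimum degree at least 3 attaining γID(G) = (5/11)·(n − 1).) -/
/-- A graph is *identifiable* if no two distinct vertices have the same closed
neighbourhood. -/
def SimpleGraph.Identifiable {V : Type*} (G : SimpleGraph V) : Prop :=
  ∀ u v : V, insert u (G.neighborSet u) = insert v (G.neighborSet v) → u = v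

/-- A set of vertices is *dominating* if every vertex is equal or adjacent to a
member of the set. -/
def SimpleGraph.DominatingSet {V : Type*} (G : SimpleGraph V) (D : Set V) : Prop :=
  ∀ v : V, ∃ d ∈ D, d = v ∨ G.Adj d v

/-- A set `C` is an *identifying code* if it is dominating and every two distinct
vertices have different closed neighbourhoods within `C`. -/
def SimpleGraph.IdentifyingCode {V : Type*} (G : SimpleGraph V) (C : Set V) : Prop :=
  G.DominatingSet C ∧
    ∀ u v : V, u ≠ v →
      insert u (G.neighborSet u) ∩ C ≠ insert v (G.neighborSet v) ∩ C

/-- The identifying code number: the minimum size of an identifying code. -/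
noncomputable def SimpleGraph.gammaID {V : Type*} (G : SimpleGraph V) : ℕ :=
  sInf {k : ℕ | ∃ C : Set V, G.IdentifyingCode C ∧ C.ncard = k}

/-! ### The graph `P11` as adjacency on `Fin 11` -/

def nbrList : Fin 11 → List ℕ
  | ⟨0,_⟩ => [10,4,5]
  | ⟨1,_⟩ => [10,2,6]
  | ⟨2,_⟩ => [1,3,7]
  | ⟨3,_⟩ => [2,4,8]
  | ⟨4,_⟩ => [3,0,9]
  | ⟨5,_⟩ => [0,7,8]
  | ⟨6,_⟩ => [1,9,8]
  | ⟨7,_⟩ => [2,5,9]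
  | ⟨8,_⟩ => [3,6,5]
  | ⟨9,_⟩ => [4,7,6]
  | ⟨10,_⟩ => [0,1]

def p11Adj (a b : Fin 11) : Prop := b.val ∈ nbrList a

instance (a b : Fin 11) : Decidable (p11Adj a b) := by unfold p11Adj; infer_instance

lemma p11_symm : ∀ a b : Fin 11, p11Adj a b → p11Adj b a := by decide
lemma p11_symm_iff : ∀ a b : Fin 11, p11Adj a b ↔ p11Adj b a := by decide
lemma p11_irrefl : ∀ a : Fin 11, ¬ p11Adj a a := by decide
lemma p11_tri : ∀ a b c : Fin 11, p11Adj a b → p11Adj b c → ¬ p11Adj c a := by decide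
lemma p11_c4 : ∀ a b c d : Fin 11, a ≠ c → b ≠ d →
    p11Adj a b → p11Adj b c → p11Adj c d → ¬ p11Adj d a := by decide
lemma p11_to10 : ∀ b : Fin 11, p11Adj b 10 → b = 0 ∨ b = 1 := by decide

def inN (s a : Fin 11) : Prop := s = a ∨ p11Adj s a
instance (s a : Fin 11) : Decidable (inN s a) := by unfold inN; infer_instance

set_option synthInstance.maxHeartbeats 1000000 in
set_option synthInstance.maxSize 2048 in
instance decApropL (l : List (Fin 11)) : Decidable (
  (∀ a : Fin 11, a ≠ 10 → ∃ s ∈ l, inN s a) ∧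
  (∀ a b : Fin 11, a ≠ 10 → b ≠ 10 → a ≠ b →
    ∃ s ∈ l, (inN s a ∧ ¬ inN s b) ∨ (inN s b ∧ ¬ inN s a))) := by infer_instance

/-- the interior domination + separation property, over a list of code vertices -/
def ApropL (l : List (Fin 11)) : Prop :=
  (∀ a : Fin 11, a ≠ 10 → ∃ s ∈ l, inN s a) ∧
  (∀ a b : Fin 11, a ≠ 10 → b ≠ 10 → a ≠ b →
    ∃ s ∈ l, (inN s a ∧ ¬ inN s b) ∨ (inN s b ∧ ¬ inN s a))

instance (l : List (Fin 11)) : Decidable (ApropL l) := decApropL l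

def BpropL (l : List (Fin 11)) : Prop := ∃ s ∈ l, s = 0 ∨ s = 1 ∨ s = 10
instance (l : List (Fin 11)) : Decidable (BpropL l) := by unfold BpropL; infer_instance

set_option maxRecDepth 10000 in
lemma fact4 : ∀ x1 x2 x3 : Fin 11, ¬ ApropL [x1,x2,x3] := by decide +kernel

set_option maxRecDepth 40000 in
set_option maxHeartbeats 1000000 in
lemma fact5_0 : ∀ x2 x3 x4 : Fin 11, ¬ (ApropL [0,x2,x3,x4] ∧ BpropL [0,x2,x3,x4]) := by
  decide +kernel

set_option maxRecDepth 40000 in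
set_option maxHeartbeats 1000000 in
lemma fact5_1 : ∀ x2 x3 x4 : Fin 11, ¬ (ApropL [1,x2,x3,x4] ∧ BpropL [1,x2,x3,x4]) := by
  decide +kernel

set_option maxRecDepth 40000 in
set_option maxHeartbeats 1000000 in
lemma fact5_2 : ∀ x2 x3 x4 : Fin 11, ¬ (ApropL [2,x2,x3,x4] ∧ BpropL [2,x2,x3,x4]) := by
  decide +kernel

set_option maxRecDepth 40000 in
set_option maxHeartbeats 1000000 in
lemma fact5_3 : ∀ x2 x3 x4 : Fin 11, ¬ (ApropL [3,x2,x3,x4] ∧ BpropL [3,x2,x3,x4]) := by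
  decide +kernel

set_option maxRecDepth 40000 in
set_option maxHeartbeats 1000000 in
lemma fact5_4 : ∀ x2 x3 x4 : Fin 11, ¬ (ApropL [4,x2,x3,x4] ∧ BpropL [4,x2,x3,x4]) := by
  decide +kernel

set_option maxRecDepth 40000 in
set_option maxHeartbeats 1000000 in
lemma fact5_5 : ∀ x2 x3 x4 : Fin 11, ¬ (ApropL [5,x2,x3,x4] ∧ BpropL [5,x2,x3,x4]) := by
  decide +kernel

set_option maxRecDepth 40000 in
set_option maxHeartbeats 1000000 in
lemma fact5_6 : ∀ x2 x3 x4 : Fin 11, ¬ (ApropL [6,x2,x3,x4] ∧ BpropL [6,x2,x3,x4]) := by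
  decide +kernel

set_option maxRecDepth 40000 in
set_option maxHeartbeats 1000000 in
lemma fact5_7 : ∀ x2 x3 x4 : Fin 11, ¬ (ApropL [7,x2,x3,x4] ∧ BpropL [7,x2,x3,x4]) := by
  decide +kernel

set_option maxRecDepth 40000 in
set_option maxHeartbeats 1000000 in
lemma fact5_8 : ∀ x2 x3 x4 : Fin 11, ¬ (ApropL [8,x2,x3,x4] ∧ BpropL [8,x2,x3,x4]) := by
  decide +kernel

set_option maxRecDepth 40000 in
set_option maxHeartbeats 1000000 in
lemma fact5_9 : ∀ x2 x3 x4 : Fin 11, ¬ (ApropL [9,x2,x3,x4] ∧ BpropL [9,x2,x3,x4]) := by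
  decide +kernel

set_option maxRecDepth 40000 in
set_option maxHeartbeats 1000000 in
lemma fact5_10 : ∀ x2 x3 x4 : Fin 11, ¬ (ApropL [10,x2,x3,x4] ∧ BpropL [10,x2,x3,x4]) := by
  decide +kernel

lemma fact5 : ∀ x1 x2 x3 x4 : Fin 11, ¬ (ApropL [x1,x2,x3,x4] ∧ BpropL [x1,x2,x3,x4]) := by
  intro x1
  fin_cases x1
  exacts [fact5_0, fact5_1, fact5_2, fact5_3, fact5_4, fact5_5, fact5_6, fact5_7, fact5_8,
    fact5_9, fact5_10]

/-- the identifying code in one copy -/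
def codeF : Finset (Fin 11) := {2,4,5,6,10}

lemma code_dom : ∀ a : Fin 11, ∃ s ∈ codeF, inN s a := by decide
lemma code_sep : ∀ a b : Fin 11, a ≠ b →
    ∃ s ∈ codeF, (inN s a ∧ ¬ inN s b) ∨ (inN s b ∧ ¬ inN s a) := by decide
lemma code_card : codeF.card = 5 := by decide

/-! ### The graph `G11^k` -/

abbrev Vt (k : ℕ) : Type := (Fin k × Fin 11) ⊕ Unit

def gAdj (k : ℕ) : Vt k → Vt k → Prop
  | .inl a, .inl b => a.1 = b.1 ∧ p11Adj a.2 b.2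
  | .inl a, .inr _ => a.2 = 10
  | .inr _, .inl b => b.2 = 10
  | .inr _, .inr _ => False

def GG (k : ℕ) : SimpleGraph (Vt k) where
  Adj := gAdj k
  symm := by
    constructor
    rintro (⟨i,a⟩|⟨⟩) (⟨j,b⟩|⟨⟩) h
    · exact ⟨h.1.symm, p11_symm _ _ h.2⟩
    · exact h
    · exact h
    · exact h
  loopless := by
    constructor
    rintro (⟨i,a⟩|⟨⟩) h
    · exact p11_irrefl a h.2
    · exact h

lemma adj_ll {k : ℕ} {i j : Fin k} {a b : Fin 11} :
    (GG k).Adj (.inl (i,a)) (.inl (j,b)) ↔ i = j ∧ p11Adj a b := Iff.rfl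
lemma adj_lr {k : ℕ} {i : Fin k} {a : Fin 11} {u : Unit} :
    (GG k).Adj (.inl (i,a)) (.inr u) ↔ a = 10 := Iff.rfl
lemma adj_rl {k : ℕ} {j : Fin k} {b : Fin 11} {u : Unit} :
    (GG k).Adj (.inr u) (.inl (j,b)) ↔ b = 10 := Iff.rfl
lemma adj_rr {k : ℕ} {u v : Unit} : ¬ (GG k).Adj (.inr u) (.inr v) := id

/-! ### Connectivity -/

lemma reach_x {k : ℕ} (i : Fin k) (a : Fin 11) :
    (GG k).Reachable (.inl (i,a)) (.inl (i,10)) := by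
  have stp : ∀ a b : Fin 11, p11Adj a b → (GG k).Adj (.inl (i,a)) (.inl (i,b)) :=
    fun a b h => ⟨rfl, h⟩
  fin_cases a
  · exact (stp 0 10 (by decide)).reachable
  · exact (stp 1 10 (by decide)).reachable
  · exact ((stp 2 1 (by decide)).reachable).trans (stp 1 10 (by decide)).reachable
  · exact ((stp 3 2 (by decide)).reachable).trans
      (((stp 2 1 (by decide)).reachable).trans (stp 1 10 (by decide)).reachable)
  · exact ((stp 4 0 (by decide)).reachable).trans (stp 0 10 (by decide)).reachable
  · exact ((stp 5 0 (by decide)).reachable).trans (stp 0 10 (by decide)).reachable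
  · exact ((stp 6 1 (by decide)).reachable).trans (stp 1 10 (by decide)).reachable
  · exact ((stp 7 2 (by decide)).reachable).trans
      (((stp 2 1 (by decide)).reachable).trans (stp 1 10 (by decide)).reachable)
  · exact ((stp 8 5 (by decide)).reachable).trans
      (((stp 5 0 (by decide)).reachable).trans (stp 0 10 (by decide)).reachable)
  · exact ((stp 9 4 (by decide)).reachable).trans
      (((stp 4 0 (by decide)).reachable).trans (stp 0 10 (by decide)).reachable)
  · exact SimpleGraph.Reachable.refl _

lemma reach_y {k : ℕ} (v : Vt k) : (GG k).Reachable v (.inr ()) := by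
  rcases v with ⟨i,a⟩ | u
  · exact (reach_x i a).trans ((adj_lr.mpr rfl).reachable)
  · cases u; exact SimpleGraph.Reachable.refl _

lemma GG_connected (k : ℕ) : (GG k).Connected := by
  rw [SimpleGraph.connected_iff]
  exact ⟨fun u v => (reach_y u).trans (reach_y v).symm, ⟨.inr ()⟩⟩

/-! ### Girth ≥ 5 : triangle-free and C4-free -/

lemma tri_free {k : ℕ} : ∀ p q r : Vt k,
    (GG k).Adj p q → (GG k).Adj q r → ¬ (GG k).Adj r p := by
  rintro (⟨i,a⟩|⟨⟩) (⟨j,b⟩|⟨⟩) (⟨m,c⟩|⟨⟩) h1 h2 h3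
  · obtain ⟨rfl, hab⟩ := h1; obtain ⟨rfl, hbc⟩ := h2
    exact p11_tri a b c hab hbc h3.2
  · -- p,q inl, r = y : a = 10 (from h3), b = 10 (from h2) ; adj a b : p11Adj 10 10
    rw [adj_rl] at h3; rw [adj_lr] at h2; subst h2 h3
    exact p11_irrefl 10 h1.2
  · rw [adj_lr] at h1; rw [adj_rl] at h2; subst h1 h2
    exact p11_irrefl 10 ((GG k).adj_symm h3).2
  · exact h2
  · rw [adj_rl] at h1; rw [adj_lr] at h3; subst h1 h3
    exact p11_irrefl 10 h2.2
  · exact h3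
  · exact h1
  · exact h1

lemma c4_free {k : ℕ} : ∀ p q r s : Vt k, p ≠ r → q ≠ s →
    (GG k).Adj p q → (GG k).Adj q r → (GG k).Adj r s → ¬ (GG k).Adj s p := by
  rintro (⟨i,a⟩|⟨u1⟩) (⟨j,b⟩|⟨u2⟩) (⟨m,c⟩|⟨u3⟩) (⟨n,d⟩|⟨u4⟩) hpr hqs h1 h2 h3 h4
  all_goals try exact h1
  all_goals try exact h2
  all_goals try exact h3
  all_goals try exact h4
  all_goals try exact hpr (congrArg Sum.inr (Subsingleton.elim _ _))
  all_goals try exact hqs (congrArg Sum.inr (Subsingleton.elim _ _))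
  -- remaining: all-inl, and single-inr cases
  all_goals try {
    simp only [adj_lr, adj_rl] at h1 h2 h3 h4
    first
    | (subst h2; subst h3; obtain ⟨rfl,-⟩ := h1; obtain ⟨rfl,-⟩ := (GG k).adj_symm h4
       exact hqs rfl)
    | (subst h3; subst h4; obtain ⟨rfl,-⟩ := h1; obtain ⟨rfl,-⟩ := h2
       exact hpr rfl)
    | (subst h1; subst h2; obtain ⟨rfl,-⟩ := h3; obtain ⟨rfl,-⟩ := (GG k).adj_symm h4
       exact hpr rfl)
    | (subst h1; subst h4; obtain ⟨rfl,-⟩ := h2; obtain ⟨rfl,-⟩ := h3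
       exact hqs rfl) }
  obtain ⟨rfl, h1⟩ := h1; obtain ⟨rfl, h2⟩ := h2; obtain ⟨rfl, h3⟩ := h3
  obtain ⟨-, h4⟩ := h4
  refine p11_c4 a b c d (fun h => hpr (by rw [h])) (fun h => hqs (by rw [h])) h1 h2 h3 h4

lemma GG_girth (k : ℕ) : 5 ≤ (GG k).egirth := by
  rw [SimpleGraph.le_egirth]
  intro a w hw
  have h3 := hw.three_le_length
  suffices h : 5 ≤ w.length by exact_mod_cast h
  by_contra hlt
  push_neg at hlt
  have hcase : w.length = 3 ∨ w.length = 4 := by omega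
  have hnd := hw.2
  rcases hcase with h | h
  · cases w with
    | nil => simp at h
    | cons h1 w1 =>
      cases w1 with
      | nil => simp at h
      | cons h2 w2 =>
        cases w2 with
        | nil => simp at h
        | cons hadj3 w3 =>
          have h0 : w3.length = 0 := by
            simp only [SimpleGraph.Walk.length_cons] at h; omega
          obtain rfl := SimpleGraph.Walk.eq_of_length_eq_zero h0
          exact tri_free _ _ _ h1 h2 hadj3
  · cases w with
    | nil => simp at h
    | cons h1 w1 =>
      rename_i b
      cases w1 with
      | nil => simp at h
      | cons h2 w2 =>
        rename_i c
        cases w2 with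
        | nil => simp at h
        | cons hadj3 w3 =>
          rename_i d
          cases w3 with
          | nil => simp at h
          | cons h4 w4 =>
            rename_i e
            have h0 : w4.length = 0 := by
              simp only [SimpleGraph.Walk.length_cons] at h; omega
            obtain rfl := SimpleGraph.Walk.eq_of_length_eq_zero h0
            have hw4 : w4.support = [e] := by
              cases w4 with
              | nil => simp
              | cons hh ww => simp at h0
            simp only [SimpleGraph.Walk.support_cons, hw4, List.tail_cons,
              List.nodup_cons, List.mem_cons, List.mem_singleton] at hnd
            have hbd : b ≠ d := fun hh => hnd.1 (Or.inr (Or.inl hh))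
            have hca : c ≠ e := fun hh => hnd.2.1 (Or.inr (Or.inl hh))
            exact c4_free e b c d (fun hh => hca hh.symm) hbd h1 h2 hadj3 h4

lemma three_le_ncard {α : Type*} {S : Set α} {a b c : α} (ha : a ∈ S) (hb : b ∈ S) (hc : c ∈ S)
    (hab : a ≠ b) (hac : a ≠ c) (hbc : b ≠ c) (hfin : S.Finite) : 3 ≤ S.ncard := by
  have h1 : ({a,b,c} : Set α).ncard = 3 := Set.ncard_eq_three.mpr ⟨a,b,c,hab,hac,hbc,rfl⟩
  calc (3:ℕ) = ({a,b,c} : Set α).ncard := h1.symm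
    _ ≤ S.ncard := Set.ncard_le_ncard
        (by rintro x (rfl|rfl|rfl) <;> assumption) hfin

lemma mem_nb {k : ℕ} {i : Fin k} {a b : Fin 11} (h : p11Adj a b) :
    (Sum.inl (i,b) : Vt k) ∈ (GG k).neighborSet (.inl (i,a)) := ⟨rfl, h⟩

lemma nb_ne {k : ℕ} {i : Fin k} {a b : Fin 11} (h : a ≠ b) :
    (Sum.inl (i,a) : Vt k) ≠ .inl (i,b) := by
  intro hh; exact h (by injection hh with hh; exact congrArg Prod.snd hh)

lemma deg_ge {k : ℕ} (hk : 3 ≤ k) : ∀ v : Vt k, 3 ≤ ((GG k).neighborSet v).ncard := by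
  rintro (⟨i,a⟩|⟨⟩)
  · fin_cases a
    · exact three_le_ncard (mem_nb (by decide)) (mem_nb (by decide))
        (mem_nb (a := 0) (b := 5) (by decide)) (nb_ne (a := 10) (b := 4) (by decide))
        (nb_ne (by decide)) (nb_ne (by decide)) (Set.toFinite _)
    · exact three_le_ncard (mem_nb (by decide)) (mem_nb (by decide))
        (mem_nb (a := 1) (b := 6) (by decide)) (nb_ne (a := 10) (b := 2) (by decide))
        (nb_ne (by decide)) (nb_ne (by decide)) (Set.toFinite _)
    · exact three_le_ncard (mem_nb (by decide)) (mem_nb (by decide))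
        (mem_nb (a := 2) (b := 7) (by decide)) (nb_ne (a := 1) (b := 3) (by decide))
        (nb_ne (by decide)) (nb_ne (by decide)) (Set.toFinite _)
    · exact three_le_ncard (mem_nb (by decide)) (mem_nb (by decide))
        (mem_nb (a := 3) (b := 8) (by decide)) (nb_ne (a := 2) (b := 4) (by decide))
        (nb_ne (by decide)) (nb_ne (by decide)) (Set.toFinite _)
    · exact three_le_ncard (mem_nb (by decide)) (mem_nb (by decide))
        (mem_nb (a := 4) (b := 9) (by decide)) (nb_ne (a := 3) (b := 0) (by decide))
        (nb_ne (by decide)) (nb_ne (by decide)) (Set.toFinite _)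
    · exact three_le_ncard (mem_nb (by decide)) (mem_nb (by decide))
        (mem_nb (a := 5) (b := 8) (by decide)) (nb_ne (a := 0) (b := 7) (by decide))
        (nb_ne (by decide)) (nb_ne (by decide)) (Set.toFinite _)
    · exact three_le_ncard (mem_nb (by decide)) (mem_nb (by decide))
        (mem_nb (a := 6) (b := 8) (by decide)) (nb_ne (a := 1) (b := 9) (by decide))
        (nb_ne (by decide)) (nb_ne (by decide)) (Set.toFinite _)
    · exact three_le_ncard (mem_nb (by decide)) (mem_nb (by decide))
        (mem_nb (a := 7) (b := 9) (by decide)) (nb_ne (a := 2) (b := 5) (by decide))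
        (nb_ne (by decide)) (nb_ne (by decide)) (Set.toFinite _)
    · exact three_le_ncard (mem_nb (by decide)) (mem_nb (by decide))
        (mem_nb (a := 8) (b := 5) (by decide)) (nb_ne (a := 3) (b := 6) (by decide))
        (nb_ne (by decide)) (nb_ne (by decide)) (Set.toFinite _)
    · exact three_le_ncard (mem_nb (by decide)) (mem_nb (by decide))
        (mem_nb (a := 9) (b := 6) (by decide)) (nb_ne (a := 4) (b := 7) (by decide))
        (nb_ne (by decide)) (nb_ne (by decide)) (Set.toFinite _)
    · refine three_le_ncard (mem_nb (a := 10) (b := 0) (by decide))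
        (mem_nb (a := 10) (b := 1) (by decide))
        (show (Sum.inr () : Vt k) ∈ (GG k).neighborSet (.inl (i,10)) from rfl)
        (nb_ne (by decide)) (by simp) (by simp) (Set.toFinite _)
  · have hinj : Function.Injective (fun i : Fin k => (Sum.inl (i,(10:Fin 11)) : Vt k)) := by
      intro x y h; simpa using h
    have hsub : (fun i : Fin k => (Sum.inl (i,(10:Fin 11)):Vt k)) '' Set.univ
        ⊆ (GG k).neighborSet (.inr ()) := by
      rintro _ ⟨i,-,rfl⟩; exact rfl
    calc (3:ℕ) ≤ k := hk
      _ = ((fun i : Fin k => (Sum.inl (i,(10:Fin 11)):Vt k)) '' Set.univ).ncard := by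
          rw [Set.ncard_image_of_injective _ hinj, Set.ncard_univ]; simp
      _ ≤ _ := Set.ncard_le_ncard hsub (Set.toFinite _)

lemma GG_ident {k : ℕ} (hk : 3 ≤ k) : (GG k).Identifiable := by
  intro u v h
  by_contra hne
  have hu : u ∈ insert v ((GG k).neighborSet v) := h ▸ Set.mem_insert u _
  rw [Set.mem_insert_iff] at hu
  rcases hu with rfl | hadj
  · exact hne rfl
  · have h2 : 2 ≤ ((GG k).neighborSet u).ncard := le_trans (by norm_num) (deg_ge hk u)
    have hex : ∃ w ∈ (GG k).neighborSet u, w ≠ v := by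
      by_contra hall; push_neg at hall
      have hsub : (GG k).neighborSet u ⊆ {v} := fun w hw => hall w hw
      have := Set.ncard_le_ncard hsub (Set.finite_singleton v)
      rw [Set.ncard_singleton] at this; omega
    obtain ⟨w, hw, hwv⟩ := hex
    have hw' : w ∈ insert v ((GG k).neighborSet v) := h ▸ Set.mem_insert_of_mem _ hw
    rw [Set.mem_insert_iff] at hw'
    rcases hw' with rfl | hw'
    · exact hwv rfl
    · exact tri_free v u w hadj hw ((GG k).adj_symm hw')

/-! ### The code and the upper bound -/

def CF (k : ℕ) : Finset (Vt k) := ((Finset.univ : Finset (Fin k)) ×ˢ codeF).image Sum.inl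

lemma inl_mem_CF {k : ℕ} {i : Fin k} {s : Fin 11} :
    (Sum.inl (i,s) : Vt k) ∈ CF k ↔ s ∈ codeF := by
  simp [CF, Finset.mem_image, Finset.mem_product]

lemma inr_not_mem_CF {k : ℕ} {u : Unit} : (Sum.inr u : Vt k) ∉ CF k := by
  simp [CF, Finset.mem_image, Finset.mem_product]

lemma CF_card {k : ℕ} : (CF k : Set (Vt k)).ncard = 5 * k := by
  rw [Set.ncard_coe_finset, CF, Finset.card_image_of_injective _ Sum.inl_injective,
    Finset.card_product, Finset.card_univ, Fintype.card_fin, code_card, mul_comm]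

lemma mem_ball {k : ℕ} {u x : Vt k} {C : Set (Vt k)} :
    x ∈ insert u ((GG k).neighborSet u) ∩ C ↔ (x = u ∨ (GG k).Adj u x) ∧ x ∈ C := by
  rw [Set.mem_inter_iff, Set.mem_insert_iff, SimpleGraph.mem_neighborSet]

lemma CF_dom {k : ℕ} (hk : 3 ≤ k) : (GG k).DominatingSet ↑(CF k) := by
  rintro (⟨i,a⟩|⟨⟩)
  · obtain ⟨s, hs, hins⟩ := code_dom a
    refine ⟨Sum.inl (i,s), Finset.mem_coe.mpr (inl_mem_CF.mpr hs), ?_⟩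
    rcases hins with rfl | h
    · exact Or.inl rfl
    · exact Or.inr ⟨rfl, h⟩
  · exact ⟨Sum.inl (⟨0, by omega⟩, 10),
      Finset.mem_coe.mpr (inl_mem_CF.mpr (by decide)), Or.inr rfl⟩

lemma sep_half {k : ℕ} {i : Fin k} {a b s : Fin 11} (hsC : s ∈ codeF)
    (hsa : inN s a) (hsb : ¬ inN s b) :
    insert (Sum.inl (i,a) : Vt k) ((GG k).neighborSet (.inl (i,a))) ∩ ↑(CF k) ≠
    insert (Sum.inl (i,b) : Vt k) ((GG k).neighborSet (.inl (i,b))) ∩ ↑(CF k) := by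
  intro h
  have hwL : (Sum.inl (i,s) : Vt k) ∈
      insert (Sum.inl (i,a) : Vt k) ((GG k).neighborSet (.inl (i,a))) ∩ ↑(CF k) := by
    refine mem_ball.mpr ⟨?_, Finset.mem_coe.mpr (inl_mem_CF.mpr hsC)⟩
    rcases hsa with rfl | hadj
    · exact Or.inl rfl
    · exact Or.inr ⟨rfl, p11_symm _ _ hadj⟩
  have hwR := h ▸ hwL
  rcases (mem_ball.mp hwR).1 with heq | hadj
  · injection heq with heq
    exact hsb (Or.inl (congrArg Prod.snd heq))
  · exact hsb (Or.inr (p11_symm _ _ hadj.2))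

lemma sep_cross {k : ℕ} {i j : Fin k} {a b : Fin 11} (hij : i ≠ j) :
    insert (Sum.inl (i,a) : Vt k) ((GG k).neighborSet (.inl (i,a))) ∩ ↑(CF k) ≠
    insert (Sum.inl (j,b) : Vt k) ((GG k).neighborSet (.inl (j,b))) ∩ ↑(CF k) := by
  intro h
  obtain ⟨s, hs, hins⟩ := code_dom a
  have hwL : (Sum.inl (i,s) : Vt k) ∈
      insert (Sum.inl (i,a) : Vt k) ((GG k).neighborSet (.inl (i,a))) ∩ ↑(CF k) := by
    refine mem_ball.mpr ⟨?_, Finset.mem_coe.mpr (inl_mem_CF.mpr hs)⟩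
    rcases hins with rfl | hadj
    · exact Or.inl rfl
    · exact Or.inr ⟨rfl, p11_symm _ _ hadj⟩
  have hwR := h ▸ hwL
  rcases (mem_ball.mp hwR).1 with heq | hadj
  · injection heq with heq
    exact hij (congrArg Prod.fst heq)
  · exact hij hadj.1.symm

lemma sep_y {k : ℕ} (hk : 3 ≤ k) {i : Fin k} {a : Fin 11} {u : Unit} :
    insert (Sum.inl (i,a) : Vt k) ((GG k).neighborSet (.inl (i,a))) ∩ ↑(CF k) ≠
    insert (Sum.inr u : Vt k) ((GG k).neighborSet (.inr u)) ∩ ↑(CF k) := by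
  intro h
  obtain ⟨j, hji⟩ : ∃ j : Fin k, j ≠ i := by
    rcases Decidable.eq_or_ne i ⟨0, by omega⟩ with rfl | hne
    · exact ⟨⟨1, by omega⟩, fun hh => absurd (congrArg Fin.val hh) (by norm_num)⟩
    · exact ⟨⟨0, by omega⟩, Ne.symm hne⟩
  have hwR : (Sum.inl (j,(10:Fin 11)) : Vt k) ∈
      insert (Sum.inr u : Vt k) ((GG k).neighborSet (.inr u)) ∩ ↑(CF k) :=
    mem_ball.mpr ⟨Or.inr rfl, Finset.mem_coe.mpr (inl_mem_CF.mpr (by decide))⟩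
  have hwL := h ▸ hwR
  rcases (mem_ball.mp hwL).1 with heq | hadj
  · injection heq with heq
    exact hji (congrArg Prod.fst heq)
  · exact hji hadj.1.symm

lemma CF_code {k : ℕ} (hk : 3 ≤ k) : (GG k).IdentifyingCode ↑(CF k) := by
  refine ⟨CF_dom hk, ?_⟩
  rintro (⟨i,a⟩|⟨u⟩) (⟨j,b⟩|⟨w⟩) hne
  · rcases Decidable.eq_or_ne i j with rfl | hij
    · have hab : a ≠ b := by
        intro hh; exact hne (by rw [hh])
      obtain ⟨s, hs, hcase⟩ := code_sep a b hab
      rcases hcase with ⟨h1, h2⟩ | ⟨h1, h2⟩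
      · exact sep_half hs h1 h2
      · exact (sep_half hs h1 h2).symm
    · exact sep_cross hij
  · exact sep_y hk
  · exact (sep_y hk).symm
  · cases u; cases w; exact absurd rfl hne

/-! ### Lower bound machinery -/

lemma set_ne_witness {α : Type*} {A B : Set α} (h : A ≠ B) :
    ∃ x, (x ∈ A ∧ x ∉ B) ∨ (x ∈ B ∧ x ∉ A) := by
  by_contra hall
  push_neg at hall
  exact h (Set.ext fun x => ⟨(hall x).1, (hall x).2⟩)

def ApropF (S : Finset (Fin 11)) : Prop :=
  (∀ a : Fin 11, a ≠ 10 → ∃ s ∈ S, inN s a) ∧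
  (∀ a b : Fin 11, a ≠ 10 → b ≠ 10 → a ≠ b →
    ∃ s ∈ S, (inN s a ∧ ¬ inN s b) ∨ (inN s b ∧ ¬ inN s a))

lemma ApropF_mono {S : Finset (Fin 11)} {l : List (Fin 11)}
    (hcov : ∀ s ∈ S, s ∈ l) (hA : ApropF S) : ApropL l := by
  constructor
  · intro a ha
    obtain ⟨s, hs, h⟩ := hA.1 a ha
    exact ⟨s, hcov s hs, h⟩
  · intro a b ha hb hab
    obtain ⟨s, hs, h⟩ := hA.2 a b ha hb hab
    exact ⟨s, hcov s hs, h⟩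

lemma cover_of_card_le {S : Finset (Fin 11)} {n : ℕ} (h : S.card ≤ n) :
    ∀ s ∈ S, s ∈ (List.range n).map (fun j => S.toList.getD j 0) := by
  intro s hs
  have hmem : s ∈ S.toList := Finset.mem_toList.mpr hs
  obtain ⟨m, hm, hms⟩ := List.mem_iff_getElem.mp hmem
  have hml : m < n := lt_of_lt_of_le (by simpa [Finset.length_toList] using hm) h
  have : S.toList.getD m 0 = s := by rw [List.getD_eq_getElem _ _ hm, hms]
  simp only [List.mem_map, List.mem_range]
  exact ⟨m, hml, this⟩

lemma fact4' {S : Finset (Fin 11)} (hA : ApropF S) : 4 ≤ S.card := by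
  by_contra h
  push_neg at h
  have hcov := cover_of_card_le (S := S) (n := 3) (by omega)
  have hl := ApropF_mono hcov hA
  have : (List.range 3).map (fun j => S.toList.getD j 0) =
      [S.toList.getD 0 0, S.toList.getD 1 0, S.toList.getD 2 0] := rfl
  rw [this] at hl
  exact fact4 _ _ _ hl

lemma fact5' {S : Finset (Fin 11)} (hA : ApropF S)
    (hB : ∃ s ∈ S, s = 0 ∨ s = 1 ∨ s = 10) : 5 ≤ S.card := by
  by_contra h
  push_neg at h
  have hcov := cover_of_card_le (S := S) (n := 4) (by omega)
  have hl := ApropF_mono hcov hA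
  have hrange : (List.range 4).map (fun j => S.toList.getD j 0) =
      [S.toList.getD 0 0, S.toList.getD 1 0, S.toList.getD 2 0, S.toList.getD 3 0] := rfl
  rw [hrange] at hl
  obtain ⟨s, hs, hs01⟩ := hB
  have hsl := hcov s hs
  rw [hrange] at hsl
  exact fact5 _ _ _ _ ⟨hl, ⟨s, hsl, hs01⟩⟩

lemma hB10 : ∀ c : Fin 11, inN c 10 → c = 0 ∨ c = 1 ∨ c = 10 := by decide

lemma lower_bound {k : ℕ} (hk : 3 ≤ k) (C : Set (Vt k))
    (hC : (GG k).IdentifyingCode C) : 5 * k ≤ C.ncard := by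
  classical
  obtain ⟨hdom, hsep⟩ := hC
  set F : Finset (Vt k) := (Set.toFinite C).toFinset with hF
  have hmemF : ∀ v, v ∈ F ↔ v ∈ C := fun v => Set.Finite.mem_toFinset _
  have hcard : C.ncard = F.card := Set.ncard_eq_toFinset_card C _
  set idx : Vt k → Option (Fin k) := Sum.elim (fun p => some p.1) (fun _ => none) with hidx
  set fib : Option (Fin k) → Finset (Vt k) := fun j => F.filter (fun v => idx v = j) with hfib
  have hsum : F.card = ∑ j : Option (Fin k), (fib j).card :=
    Finset.card_eq_sum_card_fiberwise (fun x _ => Finset.mem_univ (idx x))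
  set prj : Vt k → Fin 11 := Sum.elim Prod.snd (fun _ => 0) with hprj
  set Li : Fin k → Finset (Fin 11) := fun i => (fib (some i)).image prj with hLi
  have hLi_mem : ∀ (i : Fin k) (s : Fin 11), s ∈ Li i ↔ (Sum.inl (i,s) : Vt k) ∈ C := by
    intro i s
    constructor
    · intro hmem
      obtain ⟨v, hv, rfl⟩ := Finset.mem_image.mp hmem
      obtain ⟨hvF, hvidx⟩ := Finset.mem_filter.mp hv
      rcases v with ⟨m,c⟩ | u
      · obtain rfl : m = i := by simpa [hidx] using hvidx
        simpa [hprj] using (hmemF _).mp hvF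
      · simp [hidx] at hvidx
    · intro hmem
      exact Finset.mem_image.mpr ⟨Sum.inl (i,s),
        Finset.mem_filter.mpr ⟨(hmemF _).mpr hmem, by simp [hidx]⟩, rfl⟩
  have hfib_card : ∀ i : Fin k, (Li i).card = (fib (some i)).card := by
    intro i
    apply Finset.card_image_of_injOn
    rintro (⟨m,c⟩|u) hv (⟨m',c'⟩|u') hv' heq
    · have h1 : m = i := by simpa [hidx] using (Finset.mem_filter.mp hv).2
      have h2 : m' = i := by simpa [hidx] using (Finset.mem_filter.mp hv').2
      subst h1; subst h2
      have : c = c' := by simpa [hprj] using heq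
      rw [this]
    · exact absurd ((Finset.mem_filter.mp hv').2) (by simp [hidx])
    · exact absurd ((Finset.mem_filter.mp hv).2) (by simp [hidx])
    · exact absurd ((Finset.mem_filter.mp hv).2) (by simp [hidx])
  have key_dom : ∀ (i : Fin k) (a : Fin 11), a ≠ 10 → ∃ s ∈ Li i, inN s a := by
    intro i a ha
    obtain ⟨d, hdC, hd⟩ := hdom (Sum.inl (i,a))
    rcases d with ⟨j,b⟩ | u
    · rcases hd with heq | hadj
      · injection heq with heq
        obtain ⟨rfl, rfl⟩ : j = i ∧ b = a := ⟨congrArg Prod.fst heq, congrArg Prod.snd heq⟩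
        exact ⟨b, (hLi_mem _ b).mpr hdC, Or.inl rfl⟩
      · obtain ⟨rfl, hba⟩ := hadj
        exact ⟨b, (hLi_mem j b).mpr hdC, Or.inr hba⟩
    · rcases hd with heq | hadj
      · exact absurd heq (by simp)
      · exact absurd hadj ha
  have key_sep_half : ∀ (i : Fin k) (a b : Fin 11), a ≠ 10 →
      (∃ w, w ∈ insert (Sum.inl (i,a) : Vt k) ((GG k).neighborSet (.inl (i,a))) ∩ C ∧
            w ∉ insert (Sum.inl (i,b) : Vt k) ((GG k).neighborSet (.inl (i,b))) ∩ C) →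
      ∃ s ∈ Li i, inN s a ∧ ¬ inN s b := by
    rintro i a b ha ⟨w, hwA, hwB⟩
    obtain ⟨hw1, hwC⟩ := mem_ball.mp hwA
    rcases w with ⟨m,c⟩ | u
    · have hmc : m = i ∧ inN c a := by
        rcases hw1 with heq | hadj
        · injection heq with heq
          exact ⟨congrArg Prod.fst heq, Or.inl (congrArg Prod.snd heq)⟩
        · exact ⟨hadj.1.symm, Or.inr (p11_symm _ _ hadj.2)⟩
      obtain ⟨rfl, hca⟩ := hmc
      refine ⟨c, (hLi_mem m c).mpr hwC, hca, ?_⟩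
      intro hcb
      apply hwB
      refine mem_ball.mpr ⟨?_, hwC⟩
      rcases hcb with rfl | hpc
      · exact Or.inl rfl
      · exact Or.inr ⟨rfl, p11_symm _ _ hpc⟩
    · rcases hw1 with heq | hadj
      · exact absurd heq (by simp)
      · exact absurd hadj ha
  have key_sep : ∀ (i : Fin k) (a b : Fin 11), a ≠ 10 → b ≠ 10 → a ≠ b →
      ∃ s ∈ Li i, (inN s a ∧ ¬ inN s b) ∨ (inN s b ∧ ¬ inN s a) := by
    intro i a b ha hb hab
    have hne : (Sum.inl (i,a) : Vt k) ≠ Sum.inl (i,b) := by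
      intro h; injection h with h; exact hab (congrArg Prod.snd h)
    obtain ⟨w, hw⟩ := set_ne_witness (hsep _ _ hne)
    rcases hw with ⟨h1, h2⟩ | ⟨h1, h2⟩
    · obtain ⟨s, hs, h⟩ := key_sep_half i a b ha ⟨w, h1, h2⟩
      exact ⟨s, hs, Or.inl h⟩
    · obtain ⟨s, hs, h⟩ := key_sep_half i b a hb ⟨w, h1, h2⟩
      exact ⟨s, hs, Or.inr h⟩
  have hApropF : ∀ i : Fin k, ApropF (Li i) :=
    fun i => ⟨key_dom i, fun a b ha hb hab => key_sep i a b ha hb hab⟩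
  set p : Fin k → Prop := fun i => ∃ s ∈ Li i, s = 0 ∨ s = 1 ∨ s = 10 with hp
  have hLi_ge4 : ∀ i : Fin k, 4 ≤ (Li i).card := fun i => fact4' (hApropF i)
  have hLi_ge5 : ∀ i : Fin k, p i → 5 ≤ (Li i).card := fun i hi => fact5' (hApropF i) hi
  -- a member of the x-ball in copy i is either y or an x-neighbour in copy i
  have hxball : ∀ (i : Fin k) (w : Vt k),
      w ∈ insert (Sum.inl (i,(10:Fin 11)) : Vt k) ((GG k).neighborSet (.inl (i,10))) ∩ C →
      w ∈ C ∧ ((∃ u : Unit, w = Sum.inr u) ∨ ∃ c, w = Sum.inl (i,c) ∧ inN c 10) := by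
    intro i w hw
    obtain ⟨hw1, hwC⟩ := mem_ball.mp hw
    refine ⟨hwC, ?_⟩
    rcases w with ⟨m,c⟩ | u
    · refine Or.inr ⟨c, ?_, ?_⟩
      · rcases hw1 with heq | hadj
        · injection heq with heq
          exact congrArg (fun x => Sum.inl (x, c)) (congrArg Prod.fst heq)
        · exact congrArg (fun x => Sum.inl (x, c)) hadj.1.symm
      · rcases hw1 with heq | hadj
        · injection heq with heq
          exact Or.inl (congrArg Prod.snd heq)
        · exact Or.inr (p11_symm _ _ hadj.2)
    · exact Or.inl ⟨u, rfl⟩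
  by_cases hy : (Sum.inr () : Vt k) ∈ C
  · -- y ∈ C : at most one copy fails p
    have hBad1 : (Finset.univ.filter (fun i => ¬ p i)).card ≤ 1 := by
      rw [Finset.card_le_one]
      intro i hi j hj
      by_contra hij
      have hxne : (Sum.inl (i,(10:Fin 11)) : Vt k) ≠ Sum.inl (j,10) := by
        intro h; injection h with h; exact hij (congrArg Prod.fst h)
      have hgen : ∀ (i' j' : Fin k), ¬ p i' →
          (∃ w, w ∈ insert (Sum.inl (i',(10:Fin 11)) : Vt k)
                  ((GG k).neighborSet (.inl (i',10))) ∩ C ∧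
                w ∉ insert (Sum.inl (j',(10:Fin 11)) : Vt k)
                  ((GG k).neighborSet (.inl (j',10))) ∩ C) → False := by
        rintro i' j' hi' ⟨w, hwA, hwB⟩
        obtain ⟨hwC, hcase⟩ := hxball i' w hwA
        rcases hcase with ⟨u, rfl⟩ | ⟨c, rfl, hc⟩
        · exact hwB (mem_ball.mpr ⟨Or.inr rfl, hwC⟩)
        · exact hi' ⟨c, (hLi_mem i' c).mpr hwC, hB10 c hc⟩
      obtain ⟨w, hw⟩ := set_ne_witness (hsep _ _ hxne)
      rcases hw with ⟨h1, h2⟩ | ⟨h1, h2⟩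
      · exact hgen i j ((Finset.mem_filter.mp hi).2) ⟨w, h1, h2⟩
      · exact hgen j i ((Finset.mem_filter.mp hj).2) ⟨w, h1, h2⟩
    have hfn : 1 ≤ (fib none).card := by
      refine Finset.card_pos.mpr ⟨Sum.inr (), Finset.mem_filter.mpr ⟨(hmemF _).mpr hy, ?_⟩⟩
      simp [hidx]
    have hsplit : (∑ i ∈ Finset.univ.filter p, (Li i).card) +
        (∑ i ∈ Finset.univ.filter (fun i => ¬ p i), (Li i).card) =
        ∑ i : Fin k, (Li i).card :=
      Finset.sum_filter_add_sum_filter_not Finset.univ p (fun i => (Li i).card)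
    have hgood : 5 * (Finset.univ.filter p).card ≤
        ∑ i ∈ Finset.univ.filter p, (Li i).card := by
      have := Finset.card_nsmul_le_sum (Finset.univ.filter p) (fun i => (Li i).card) 5
        (fun i hi => hLi_ge5 i ((Finset.mem_filter.mp hi).2))
      simpa [mul_comm] using this
    have hbad4 : 4 * (Finset.univ.filter (fun i => ¬ p i)).card ≤
        ∑ i ∈ Finset.univ.filter (fun i => ¬ p i), (Li i).card := by
      have := Finset.card_nsmul_le_sum (Finset.univ.filter (fun i => ¬ p i))
        (fun i => (Li i).card) 4 (fun i _ => hLi_ge4 i)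
      simpa [mul_comm] using this
    have hcards : (Finset.univ.filter p).card +
        (Finset.univ.filter (fun i => ¬ p i)).card = k := by
      rw [Finset.card_filter_add_card_filter_not, Finset.card_univ, Fintype.card_fin]
    have htot : F.card = (fib none).card + ∑ i : Fin k, (Li i).card := by
      rw [hsum, Fintype.sum_option]
      congr 1
      exact Finset.sum_congr rfl (fun i _ => (hfib_card i).symm)
    rw [hcard]
    omega
  · -- y ∉ C : every copy satisfies p
    have hall : ∀ i : Fin k, p i := by
      intro i
      obtain ⟨d, hdC, hd⟩ := hdom (Sum.inl (i,10))
      rcases d with ⟨j,b⟩ | u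
      · have hji : j = i ∧ inN b 10 := by
          rcases hd with heq | hadj
          · injection heq with heq
            exact ⟨congrArg Prod.fst heq, Or.inl (congrArg Prod.snd heq)⟩
          · exact ⟨hadj.1, Or.inr hadj.2⟩
        obtain ⟨rfl, hb⟩ := hji
        exact ⟨b, (hLi_mem j b).mpr hdC, hB10 b hb⟩
      · cases u; exact absurd hdC hy
    have hgood : 5 * k ≤ ∑ i : Fin k, (Li i).card := by
      have := Finset.card_nsmul_le_sum Finset.univ (fun i => (Li i).card) 5
        (fun i _ => hLi_ge5 i (hall i))
      simpa [mul_comm] using this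
    have htot : F.card = (fib none).card + ∑ i : Fin k, (Li i).card := by
      rw [hsum, Fintype.sum_option]
      congr 1
      exact Finset.sum_congr rfl (fun i _ => (hfib_card i).symm)
    rw [hcard]
    omega

/-- Proposition: for every `k ≥ 3` there is a connected identifiable graph of order
`n = 11k+1`, girth at least 5, minimum degree at least 3, and identifying code
number `5k = (5/11)·(n-1)`. -/
theorem exists_connected_graph_gammaID_eq_five_elevenths
    (k : ℕ) (hk : 3 ≤ k) :
    ∃ (V : Type) (inst : Fintype V) (G : SimpleGraph V),
      G.Connected ∧
      G.Identifiable ∧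
      @Fintype.card V inst = 11 * k + 1 ∧
      5 ≤ G.egirth ∧
      (∀ v : V, 3 ≤ (G.neighborSet v).ncard) ∧
      G.gammaID = 5 * k := by
  refine ⟨Vt k, inferInstance, GG k, GG_connected k, GG_ident hk, ?_, GG_girth k,
    deg_ge hk, ?_⟩
  · simp only [Fintype.card_sum, Fintype.card_prod, Fintype.card_fin, Fintype.card_unit]
    omega
  · unfold SimpleGraph.gammaID
    apply le_antisymm
    · exact Nat.sInf_le ⟨↑(CF k), CF_code hk, CF_card⟩
    · exact le_csInf ⟨5*k, ↑(CF k), CF_code hk, CF_card⟩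
        (by rintro m ⟨C, hC, rfl⟩; exact lower_bound hk C hC)
end

section
/- The graph G12 (on 12 vertices) has identifying code number γID(G12) = 6. -/
/-- The graph `G12` on vertices `0,…,11`: the Hamiltonian cycle `0-1-…-11-0`
together with the chords `{0,4}, {1,8}, {2,6}, {3,10}, {5,9}, {7,11}`. -/
def G12 : SimpleGraph (Fin 12) :=
  SimpleGraph.fromRel (fun a b =>
    b = a + 1 ∨
    (a, b) ∈ ([(0, 4), (1, 8), (2, 6), (3, 10), (5, 9), (7, 11)] :
      List (Fin 12 × Fin 12)))


namespace GID

abbrev R (a b : Fin 12) : Prop :=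
  b = a + 1 ∨
    (a, b) ∈ ([(0, 4), (1, 8), (2, 6), (3, 10), (5, 9), (7, 11)] :
      List (Fin 12 × Fin 12))

instance : DecidableRel G12.Adj := fun a b =>
  decidable_of_iff (a ≠ b ∧ (R a b ∨ R b a)) Iff.rfl

def msk : Fin 12 → ℕ := ![2067, 263, 78, 1052, 57, 624, 228, 2496, 898, 1824, 3592, 3201]

lemma msk_bit : ∀ u x : Fin 12, (msk u).testBit x.val ↔ (x = u ∨ G12.Adj u x) := by decide

lemma msk_lt : ∀ u : Fin 12, msk u < 4096 := by decide

def good (m : ℕ) : Prop :=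
  (∀ v : Fin 12, msk v &&& m ≠ 0) ∧
  ∀ u v : Fin 12, u ≠ v → msk u &&& m ≠ msk v &&& m

instance : DecidablePred good := fun _ => inferInstanceAs (Decidable (_ ∧ _))

def pc (m : ℕ) : ℕ := ((Finset.range 12).filter (fun j => m.testBit j)).card

set_option maxRecDepth 10000 in
lemma lb0 : ∀ m ∈ Finset.Ico (0) (512), pc m ≤ 5 → ¬ good m := by decide
set_option maxRecDepth 10000 in
lemma lb1 : ∀ m ∈ Finset.Ico (512) (1024), pc m ≤ 5 → ¬ good m := by decide
set_option maxRecDepth 10000 in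
lemma lb2 : ∀ m ∈ Finset.Ico (1024) (1536), pc m ≤ 5 → ¬ good m := by decide
set_option maxRecDepth 10000 in
lemma lb3 : ∀ m ∈ Finset.Ico (1536) (2048), pc m ≤ 5 → ¬ good m := by decide
set_option maxRecDepth 10000 in
lemma lb4 : ∀ m ∈ Finset.Ico (2048) (2560), pc m ≤ 5 → ¬ good m := by decide
set_option maxRecDepth 10000 in
lemma lb5 : ∀ m ∈ Finset.Ico (2560) (3072), pc m ≤ 5 → ¬ good m := by decide
set_option maxRecDepth 10000 in
lemma lb6 : ∀ m ∈ Finset.Ico (3072) (3584), pc m ≤ 5 → ¬ good m := by decide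
set_option maxRecDepth 10000 in
lemma lb7 : ∀ m ∈ Finset.Ico (3584) (4096), pc m ≤ 5 → ¬ good m := by decide

lemma lb : ∀ m < 4096, pc m ≤ 5 → ¬ good m := by
  intro m hm
  by_cases h0 : m < 512
  · exact lb0 m (Finset.mem_Ico.2 (by omega))
  by_cases h1 : m < 1024
  · exact lb1 m (Finset.mem_Ico.2 (by omega))
  by_cases h2 : m < 1536
  · exact lb2 m (Finset.mem_Ico.2 (by omega))
  by_cases h3 : m < 2048
  · exact lb3 m (Finset.mem_Ico.2 (by omega))
  by_cases h4 : m < 2560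
  · exact lb4 m (Finset.mem_Ico.2 (by omega))
  by_cases h5 : m < 3072
  · exact lb5 m (Finset.mem_Ico.2 (by omega))
  by_cases h6 : m < 3584
  · exact lb6 m (Finset.mem_Ico.2 (by omega))
  exact lb7 m (Finset.mem_Ico.2 (by omega))

lemma sum_range_pow : ∀ n : ℕ, ∑ i ∈ Finset.range n, 2^i = 2^n - 1 := by
  intro n
  induction n with
  | zero => simp
  | succ n IH =>
    rw [Finset.sum_range_succ, IH, pow_succ]
    have : 1 ≤ 2^n := Nat.one_le_two_pow
    omega

lemma testBit_sum (F : Finset ℕ) : ∀ j, (∑ i ∈ F, 2^i).testBit j ↔ j ∈ F := by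
  induction F using Finset.induction_on_max with
  | empty => simp
  | insert a F ha IH =>
    intro j
    have hFsub : F ⊆ Finset.range a := fun b hb => Finset.mem_range.2 (ha b hb)
    have hs : (∑ i ∈ F, 2^i) < 2^a := by
      have h1 : (∑ i ∈ F, 2^i) ≤ ∑ i ∈ Finset.range a, 2^i :=
        Finset.sum_le_sum_of_subset hFsub
      rw [sum_range_pow] at h1
      have : 1 ≤ 2^a := Nat.one_le_two_pow
      omega
    have hna : a ∉ F := fun h => lt_irrefl a (ha a h)
    rw [Finset.sum_insert hna]
    have key : (2^a + ∑ i ∈ F, 2^i).testBit j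
        = if j < a then (∑ i ∈ F, 2^i).testBit j else Nat.testBit 1 (j - a) := by
      have := Nat.testBit_two_pow_mul_add 1 hs j
      rwa [mul_one] at this
    rw [key]
    by_cases hj : j < a
    · simp only [hj, if_true]
      rw [IH j, Finset.mem_insert]
      constructor
      · exact fun h => Or.inr h
      · rintro (rfl | h)
        · omega
        · exact h
    · simp only [hj, if_false]
      rw [Finset.mem_insert]
      constructor
      · intro h
        have := Nat.testBit_one_eq_true_iff_self_eq_zero.mp h
        left; omega
      · rintro (rfl | h)
        · have : j - j = 0 := by omega
          rw [this]; rfl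
        · exact absurd (ha j h) hj

open Classical in
noncomputable def mC (C : Set (Fin 12)) : ℕ := ∑ i ∈ (C.toFinset.image Fin.val), 2^i

open Classical in
lemma mC_bit (C : Set (Fin 12)) (x : Fin 12) : (mC C).testBit x.val ↔ x ∈ C := by
  rw [mC, testBit_sum, Finset.mem_image]
  constructor
  · rintro ⟨i, hi, hval⟩
    have : i = x := Fin.ext hval
    subst this
    exact Set.mem_toFinset.mp hi
  · intro h
    exact ⟨x, Set.mem_toFinset.mpr h, rfl⟩

open Classical in
lemma mC_bit_nat (C : Set (Fin 12)) (j : ℕ) (hj : (mC C).testBit j) : j < 12 := by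
  rw [mC, testBit_sum, Finset.mem_image] at hj
  obtain ⟨i, _, rfl⟩ := hj
  exact i.isLt

open Classical in
lemma mC_lt (C : Set (Fin 12)) : mC C < 4096 := by
  have hsub : C.toFinset.image Fin.val ⊆ Finset.range 12 := by
    intro j hj
    rw [Finset.mem_image] at hj
    obtain ⟨i, _, rfl⟩ := hj
    exact Finset.mem_range.2 i.isLt
  have h1 : mC C ≤ ∑ i ∈ Finset.range 12, 2^i := by
    rw [mC]
    exact Finset.sum_le_sum_of_subset hsub
  rw [sum_range_pow] at h1
  omega

lemma and_bit_high {a m j : ℕ} (ha : a < 4096) (hj : 12 ≤ j) : (a &&& m).testBit j = false := by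
  have h1 : a &&& m < 2^j := by
    have := Nat.and_le_left (n := a) (m := m)
    have h2 : (4096 : ℕ) = 2^12 := by norm_num
    have h3 : (2:ℕ)^12 ≤ 2^j := Nat.pow_le_pow_right (by norm_num) hj
    omega
  exact Nat.testBit_lt_two_pow h1

lemma code_iff (C : Set (Fin 12)) : G12.IdentifyingCode C ↔ good (mC C) := by
  constructor
  · rintro ⟨hdom, hid⟩
    constructor
    · intro v
      obtain ⟨d, hd, hdv⟩ := hdom v
      intro h0
      have hb : (msk v &&& mC C).testBit d.val = true := by
        rw [Nat.testBit_and]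
        have h1 : (msk v).testBit d.val = true := by
          rw [msk_bit]
          rcases hdv with rfl | hadj
          · exact Or.inl rfl
          · exact Or.inr (G12.adj_symm hadj)
        have h2 : (mC C).testBit d.val = true := by
          rw [mC_bit]; exact hd
        rw [h1, h2]; rfl
      rw [h0] at hb
      simp [Nat.zero_testBit] at hb
    · intro u v huv heq
      apply hid u v huv
      ext x
      have hb := congrArg (fun n => n.testBit x.val) heq
      simp only [Nat.testBit_and] at hb
      simp only [Set.mem_inter_iff, Set.mem_insert_iff, SimpleGraph.mem_neighborSet]
      rw [← msk_bit u x, ← msk_bit v x, ← mC_bit C x,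
        ← Bool.and_eq_true, ← Bool.and_eq_true, hb]
  · rintro ⟨hdom, hid⟩
    constructor
    · intro v
      have h0 := hdom v
      have hex : ∃ j, (msk v &&& mC C).testBit j = true := by
        by_contra h
        push_neg at h
        exact h0 (Nat.zero_of_testBit_eq_false (fun i => by
          have := h i; simpa using this))
      obtain ⟨j, hj⟩ := hex
      rw [Nat.testBit_and, Bool.and_eq_true] at hj
      have hj12 : j < 12 := mC_bit_nat C j hj.2
      set d : Fin 12 := ⟨j, hj12⟩
      have h1 : (msk v).testBit d.val = true := hj.1
      rw [msk_bit] at h1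
      refine ⟨d, ?_, ?_⟩
      · rw [← mC_bit C d]; exact hj.2
      · rcases h1 with rfl | hadj
        · exact Or.inl rfl
        · exact Or.inr (G12.adj_symm hadj)
    · intro u v huv heq
      apply hid u v huv
      apply Nat.eq_of_testBit_eq
      intro j
      by_cases hj : j < 12
      · set x : Fin 12 := ⟨j, hj⟩
        have hx := congrArg (fun s => x ∈ s) heq
        simp only [Set.mem_inter_iff, Set.mem_insert_iff, SimpleGraph.mem_neighborSet,
          eq_iff_iff] at hx
        rw [Nat.testBit_and, Nat.testBit_and]
        have e1 := msk_bit u x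
        have e2 := msk_bit v x
        have e3 := mC_bit C x
        by_cases hmem : (x = v ∨ G12.Adj v x) ∧ x ∈ C
        · have hmem' := hx.mpr hmem
          have b1 : (msk u).testBit x.val = true := e1.mpr hmem'.1
          have b2 : (mC C).testBit x.val = true := e3.mpr hmem'.2
          have b3 : (msk v).testBit x.val = true := e2.mpr hmem.1
          rw [b1, b2, b3]
        · have hmem' : ¬ ((x = u ∨ G12.Adj u x) ∧ x ∈ C) := fun h => hmem (hx.mp h)
          have b1 : ((msk u).testBit x.val && (mC C).testBit x.val) = false := by
            by_contra hb
            rw [Bool.not_eq_false, Bool.and_eq_true] at hb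
            exact hmem' ⟨e1.mp hb.1, e3.mp hb.2⟩
          have b2 : ((msk v).testBit x.val && (mC C).testBit x.val) = false := by
            by_contra hb
            rw [Bool.not_eq_false, Bool.and_eq_true] at hb
            exact hmem ⟨e2.mp hb.1, e3.mp hb.2⟩
          rw [b1, b2]
      · rw [and_bit_high (msk_lt u) (by omega), and_bit_high (msk_lt v) (by omega)]

open Classical in
lemma pc_mC (C : Set (Fin 12)) : pc (mC C) = C.ncard := by
  have h1 : ((Finset.range 12).filter (fun j => (mC C).testBit j))
      = C.toFinset.image Fin.val := by
    ext j
    simp only [Finset.mem_filter, Finset.mem_range, Finset.mem_image, Set.mem_toFinset]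
    constructor
    · rintro ⟨hj, hb⟩
      exact ⟨⟨j, hj⟩, (mC_bit C ⟨j, hj⟩).mp hb, rfl⟩
    · rintro ⟨i, hi, rfl⟩
      exact ⟨i.isLt, (mC_bit C i).mpr hi⟩
  rw [pc, h1, Finset.card_image_of_injective _ Fin.val_injective,
    ← Set.ncard_eq_toFinset_card']

end GID

/-- Proposition: the graph `G12` has identifying code number 6. -/
theorem gammaID_G12 : G12.gammaID = 6 := by
  have hF : GID.mC ↑({0,1,2,3,5,6} : Finset (Fin 12)) = 111 := by
    rw [GID.mC, Finset.toFinset_coe]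
    decide
  have hgood : GID.good 111 := by decide
  have code6 : G12.IdentifyingCode ↑({0,1,2,3,5,6} : Finset (Fin 12)) := by
    rw [GID.code_iff, hF]
    exact hgood
  have card6 : (↑({0,1,2,3,5,6} : Finset (Fin 12)) : Set (Fin 12)).ncard = 6 := by
    rw [Set.ncard_coe_finset]
    decide
  have mem6 : (6 : ℕ) ∈ {k : ℕ | ∃ C : Set (Fin 12), G12.IdentifyingCode C ∧ C.ncard = k} :=
    ⟨_, code6, card6⟩
  have lower : ∀ k ∈ {k : ℕ | ∃ C : Set (Fin 12), G12.IdentifyingCode C ∧ C.ncard = k},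
      6 ≤ k := by
    rintro k ⟨C, hC, rfl⟩
    by_contra h
    push_neg at h
    have hg := (GID.code_iff C).mp hC
    exact GID.lb _ (GID.mC_lt C) (by rw [GID.pc_mC]; omega) hg
  rw [SimpleGraph.gammaID]
  exact le_antisymm (Nat.sInf_le mem6) (le_csInf ⟨6, mem6⟩ lower)
end
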